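/- Let m, n be positive integers, 0 ≤ k ≤ n, and A the m^n × m^n matrix indexed by (ℤ/mℤ)^n with A_{f,g} = C(Z(g-f), k). Fix a primitive m-th root of unity ζ. Then for each y ∈ (ℤ/mℤ)^n, the vector v_y with entries (v_y)_x = ζ^{y·x} is an eigenvector of A with eigenvalue m^{n-k} · C(Z(y), n-k). -/

import Mathlib

open Finset

section aux

variable {m : ℕ} [NeZero m] {ζ : ℂ}

lemma pow_val_mod (hζ : IsPrimitiveRoot ζ m) (t : ℕ) : ζ ^ (t % m) = ζ ^ t := by
  conv_rhs => rw [← Nat.mod_add_div t m]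
  rw [pow_add, pow_mul, hζ.pow_eq_one, one_pow, mul_one]

lemma e_add (hζ : IsPrimitiveRoot ζ m) (a b : ZMod m) :
    ζ ^ (a + b).val = ζ ^ a.val * ζ ^ b.val := by
  rw [ZMod.val_add, pow_val_mod hζ, pow_add]

lemma e_sum (hζ : IsPrimitiveRoot ζ m) {ι : Type*} (s : Finset ι) (f : ι → ZMod m) :
    ζ ^ (∑ i ∈ s, f i).val = ∏ i ∈ s, ζ ^ (f i).val := by
  induction s using Finset.cons_induction with
  | empty => simp
  | cons i s hi ih => rw [Finset.sum_cons, e_add hζ, ih, Finset.prod_cons]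

lemma char_sum (hζ : IsPrimitiveRoot ζ m) (a : ZMod m) :
    ∑ x : ZMod m, ζ ^ (a * x).val = if a = 0 then (m : ℂ) else 0 := by
  have h1 : ∀ x : ZMod m, ζ ^ (a * x).val = (ζ ^ a.val) ^ x.val := by
    intro x
    rw [ZMod.val_mul, pow_val_mod hζ, pow_mul]
  have h2 : ∑ x : ZMod m, ζ ^ (a * x).val = ∑ j ∈ range m, (ζ ^ a.val) ^ j := by
    rw [Finset.sum_congr rfl (fun x _ => h1 x)]
    exact Finset.sum_nbij' (fun x => x.val) (fun j => (j : ZMod m))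
      (fun x _ => Finset.mem_range.mpr x.val_lt) (fun j _ => Finset.mem_univ _)
      (fun x _ => ZMod.natCast_zmod_val x)
      (fun j hj => ZMod.val_cast_of_lt (Finset.mem_range.mp hj))
      (fun x _ => rfl)
  rw [h2]
  by_cases ha : a = 0
  · simp [ha]
  · rw [if_neg ha]
    have hne : ζ ^ a.val ≠ 1 := by
      intro h3
      rw [hζ.pow_eq_one_iff_dvd] at h3
      have h0 : a.val = 0 := Nat.eq_zero_of_dvd_of_lt h3 a.val_lt
      exact ha ((ZMod.val_eq_zero a).mp h0)
    rw [geom_sum_eq hne]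
    have hm1 : (ζ ^ a.val) ^ m = 1 := by
      rw [← pow_mul, mul_comm, pow_mul, hζ.pow_eq_one, one_pow]
    rw [hm1, sub_self, zero_div]

lemma main_sum (m n k : ℕ) [NeZero m] (hk : k ≤ n) (ζ : ℂ) (hζ : IsPrimitiveRoot ζ m)
    (y : Fin n → ZMod m) :
    ∑ h : Fin n → ZMod m,
      ((Finset.univ.filter (fun i => h i = 0)).card.choose k : ℂ) * ζ ^ (∑ i, y i * h i).val
    = (m : ℂ) ^ (n - k) *
        ((Finset.univ.filter (fun i => y i = 0)).card.choose (n - k) : ℂ) := by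
  have hchoose : ∀ h : Fin n → ZMod m,
      ((Finset.univ.filter (fun i => h i = 0)).card.choose k : ℂ)
        = ∑ S ∈ powersetCard k (univ : Finset (Fin n)),
            if ∀ i ∈ S, h i = 0 then (1 : ℂ) else 0 := by
    intro h
    rw [← card_powersetCard]
    have hps : powersetCard k (univ.filter (fun i => h i = 0))
        = (powersetCard k (univ : Finset (Fin n))).filter (fun S => ∀ i ∈ S, h i = 0) := by
      ext S
      simp only [mem_powersetCard, mem_filter, Finset.subset_iff, mem_filter, mem_univ,
        true_and, subset_univ]
      tauto
    rw [hps, card_filter]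
    push_cast
    rfl
  calc ∑ h : Fin n → ZMod m,
      ((Finset.univ.filter (fun i => h i = 0)).card.choose k : ℂ) * ζ ^ (∑ i, y i * h i).val
      = ∑ S ∈ powersetCard k (univ : Finset (Fin n)), ∑ h : Fin n → ZMod m,
          (if ∀ i ∈ S, h i = 0 then (1 : ℂ) else 0) * ζ ^ (∑ i, y i * h i).val := by
        simp_rw [hchoose, Finset.sum_mul]
        exact Finset.sum_comm
    _ = ∑ S ∈ powersetCard k (univ : Finset (Fin n)),
          (if ∀ i ∉ S, y i = 0 then (m : ℂ) ^ (n - k) else 0) := by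
        apply Finset.sum_congr rfl
        intro S hS
        have hcard : S.card = k := (mem_powersetCard.mp hS).2
        have hterm : ∀ h : Fin n → ZMod m,
            (if ∀ i ∈ S, h i = 0 then (1:ℂ) else 0) * ζ ^ (∑ i, y i * h i).val
            = ∏ i, ((if i ∈ S then (if h i = 0 then (1:ℂ) else 0) else 1)
                * ζ ^ (y i * h i).val) := by
          intro h
          rw [e_sum hζ univ (fun i => y i * h i), Finset.prod_mul_distrib,
            Fintype.prod_ite_mem, Finset.prod_boole]
          simp
        rw [Finset.sum_congr rfl (fun h _ => hterm h),
          ← Fintype.prod_sum (fun (i : Fin n) (a : ZMod m) =>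
            (if i ∈ S then (if a = 0 then (1:ℂ) else 0) else 1) * ζ ^ (y i * a).val)]
        have hfac : ∀ i : Fin n,
            (∑ a : ZMod m, (if i ∈ S then (if a = 0 then (1:ℂ) else 0) else 1)
                * ζ ^ (y i * a).val)
            = if i ∈ S then 1 else (if y i = 0 then (m : ℂ) else 0) := by
          intro i
          by_cases hi : i ∈ S
          · simp only [hi, if_true]
            rw [Finset.sum_congr rfl (fun a _ => by rw [ite_mul, one_mul, zero_mul])]
            rw [Finset.sum_ite_eq' univ (0 : ZMod m) (fun a => ζ ^ (y i * a).val)]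
            simp
          · simp only [hi, if_false, one_mul]
            exact char_sum hζ (y i)
        rw [Finset.prod_congr rfl (fun i _ => hfac i)]
        have hsplit : ∏ i : Fin n, (if i ∈ S then (1:ℂ) else (if y i = 0 then (m:ℂ) else 0))
            = ∏ i ∈ Sᶜ, (if y i = 0 then (m : ℂ) else 0) := by
          rw [← Fintype.prod_ite_mem Sᶜ (fun i => if y i = 0 then (m:ℂ) else 0)]
          apply Finset.prod_congr rfl
          intro i _
          by_cases hi : i ∈ S <;> simp [hi]
        rw [hsplit]
        by_cases hy : ∀ i ∉ S, y i = 0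
        · rw [if_pos hy]
          have : ∀ i ∈ Sᶜ, (if y i = 0 then (m:ℂ) else 0) = (m : ℂ) := by
            intro i hi
            rw [if_pos (hy i (Finset.mem_compl.mp hi))]
          rw [Finset.prod_congr rfl this, Finset.prod_const, Finset.card_compl,
            Fintype.card_fin, hcard]
        · rw [if_neg hy]
          push_neg at hy
          obtain ⟨i, hiS, hiy⟩ := hy
          exact Finset.prod_eq_zero (Finset.mem_compl.mpr hiS) (by rw [if_neg hiy])
    _ = (m : ℂ) ^ (n - k) *
          ((Finset.univ.filter (fun i => y i = 0)).card.choose (n - k) : ℂ) := by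
        rw [← Finset.sum_filter, Finset.sum_const, nsmul_eq_mul, mul_comm]
        congr 1
        have hcount : ((powersetCard k (univ : Finset (Fin n))).filter
              (fun S => ∀ i ∉ S, y i = 0)).card
            = (powersetCard (n - k) (univ.filter (fun i => y i = 0))).card := by
          apply Finset.card_nbij' (fun S => Sᶜ) (fun T => Tᶜ)
          · intro S hS
            simp only [Finset.mem_coe, mem_filter, mem_powersetCard, subset_univ, true_and] at hS
            obtain ⟨hSc, hSy⟩ := hS
            rw [Finset.mem_coe, mem_powersetCard]
            constructor
            · intro i hi
              exact Finset.mem_filter.mpr ⟨Finset.mem_univ i, hSy i (Finset.mem_compl.mp hi)⟩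
            · rw [Finset.card_compl, Fintype.card_fin, hSc]
          · intro T hT
            rw [Finset.mem_coe, mem_powersetCard] at hT
            obtain ⟨hTy, hTc⟩ := hT
            simp only [Finset.mem_coe, mem_filter, mem_powersetCard, subset_univ, true_and]
            constructor
            · rw [Finset.card_compl, Fintype.card_fin, hTc, Nat.sub_sub_self hk]
            · intro i hi
              have : i ∈ T := by
                by_contra hiT
                exact hi (Finset.mem_compl.mpr hiT)
              exact (Finset.mem_filter.mp (hTy this)).2
          · intro S _; exact compl_compl S
          · intro T _; exact compl_compl T
        rw [hcount, card_powersetCard]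

end aux

theorem stmt_7 (m n k : ℕ) [NeZero m] (hn : 0 < n) (hk : k ≤ n)
    (A : Matrix (Fin n → ZMod m) (Fin n → ZMod m) ℂ)
    (hA : ∀ f g, A f g =
      ((Finset.univ.filter (fun i => (g - f) i = 0)).card.choose k : ℂ))
    (ζ : ℂ) (hζ : IsPrimitiveRoot ζ m) (y : Fin n → ZMod m)
    (v : (Fin n → ZMod m) → ℂ)
    (hv : ∀ x, v x = ζ ^ (∑ i, y i * x i).val) :
    v ≠ 0 ∧
    A.mulVec v =
      ((m : ℂ) ^ (n - k) *
        ((Finset.univ.filter (fun i => y i = 0)).card.choose (n - k) : ℂ)) • v := by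
  constructor
  · intro h0
    have h1 : v 0 = 0 := congrFun h0 0
    rw [hv] at h1
    simp at h1
  · funext f
    have hre : A.mulVec v f
        = v f * ∑ h : Fin n → ZMod m,
            ((Finset.univ.filter (fun i => h i = 0)).card.choose k : ℂ)
              * ζ ^ (∑ i, y i * h i).val := by
      rw [Matrix.mulVec, dotProduct, Finset.mul_sum]
      refine (Fintype.sum_equiv (Equiv.addLeft f)
        (fun h => v f * (((Finset.univ.filter (fun i => h i = 0)).card.choose k : ℂ)
          * ζ ^ (∑ i, y i * h i).val))
        (fun g => A f g * v g) ?_).symm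
      intro h
      have he : (Equiv.addLeft f) h = f + h := rfl
      rw [he, hA, hv, hv]
      have h1 : (f + h) - f = h := by abel
      rw [h1]
      have h2 : (∑ i, y i * (f + h) i) = (∑ i, y i * f i) + (∑ i, y i * h i) := by
        rw [← Finset.sum_add_distrib]
        exact Finset.sum_congr rfl (fun i _ => by simp [Pi.add_apply, mul_add])
      rw [h2, e_add hζ]
      ring
    rw [hre, main_sum m n k hk ζ hζ y]
    simp only [Pi.smul_apply, smul_eq_mul]
    ring
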